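/- Symmetrization identity for the logarithmic kernel: for a finite measure ν on (0,1) with density f and any n ≥ 1, ∬ ((x₁^{n+1} − x₂^{n+1})/(x₁ − x₂) − (x₁^n − x₂^n)/(x₁ − x₂)) dν(x₁) dν(x₂) = −2 ∫₀¹ x^{n−1} (Hf)(x) f(x) x(1−x) dx, where Hf is the Hilbert transform (principal value) of f, assuming f ∈ L³((0,1), x(1−x)dx) so that Hf exists and H_ε f → Hf in the weighted L³ norm. -/

import Mathlib

open MeasureTheory Set Filter

/-- Truncated Hilbert transform on `(0,1)`:
`(H_ε f)(x) = ∫_{t ∈ (0,1), |x−t| > ε} f(t)/(x−t) dt`. -/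
noncomputable def truncHilbert (f : ℝ → ℝ) (ε x : ℝ) : ℝ :=
  ∫ t in Set.Ioo (0:ℝ) 1, if ε < |x - t| then f t / (x - t) else 0

set_option maxHeartbeats 1000000

namespace Stmt11Aux

lemma mul_le_cube_add {a b : ℝ} (ha : 0 ≤ a) (hb : 0 ≤ b) :
    a * b ≤ a ^ 3 + b * Real.sqrt b := by
  rcases le_or_gt a (Real.sqrt b) with h | h
  · nlinarith [Real.sqrt_nonneg b, mul_le_mul_of_nonneg_right h hb,
      pow_nonneg ha 3]
  · have hb' : b ≤ a ^ 2 := by nlinarith [Real.sq_sqrt hb, Real.sqrt_nonneg b]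
    nlinarith [mul_le_mul_of_nonneg_left hb' ha, Real.sqrt_nonneg b,
      mul_nonneg hb (Real.sqrt_nonneg b)]

lemma self_sqrt_le {a : ℝ} (ha : 0 ≤ a) : a * Real.sqrt a ≤ 1 + a ^ 3 := by
  rcases le_or_gt a 1 with h | h
  · have h1 : Real.sqrt a ≤ 1 := Real.sqrt_le_one.mpr h
    nlinarith [Real.sqrt_nonneg a, pow_nonneg ha 3,
      mul_le_mul_of_nonneg_left h1 ha]
  · have h1 : Real.sqrt a ≤ a := by
      have : Real.sqrt a ≤ Real.sqrt (a ^ 2) := Real.sqrt_le_sqrt (by nlinarith)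
      rwa [Real.sqrt_sq ha] at this
    nlinarith [mul_le_mul_of_nonneg_left h1 ha]

lemma div_pow_sub_bound (k : ℕ) {x y : ℝ} (hx : x ∈ Set.Ioo (0:ℝ) 1)
    (hy : y ∈ Set.Ioo (0:ℝ) 1) : |(x ^ k - y ^ k) / (x - y)| ≤ k := by
  rcases eq_or_ne x y with rfl | hxy
  · simp
  · have hd : x - y ≠ 0 := sub_ne_zero.mpr hxy
    rw [← geom_sum₂_mul x y k, mul_div_cancel_right₀ _ hd]
    calc |∑ i ∈ Finset.range k, x ^ i * y ^ (k - 1 - i)|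
        ≤ ∑ i ∈ Finset.range k, |x ^ i * y ^ (k - 1 - i)| :=
          Finset.abs_sum_le_sum_abs _ _
      _ ≤ ∑ _i ∈ Finset.range k, (1:ℝ) := by
          refine Finset.sum_le_sum fun i _ => ?_
          rw [abs_mul, abs_pow, abs_pow]
          have h1 : |x| ^ i ≤ 1 :=
            pow_le_one₀ (abs_nonneg x) (abs_le.mpr ⟨by linarith [hx.1], hx.2.le⟩)
          have h2 : |y| ^ (k - 1 - i) ≤ 1 :=
            pow_le_one₀ (abs_nonneg y) (abs_le.mpr ⟨by linarith [hy.1], hy.2.le⟩)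
          nlinarith [pow_nonneg (abs_nonneg x) i, pow_nonneg (abs_nonneg y) (k-1-i)]
      _ = k := by simp

lemma Tk_meas {f : ℝ → ℝ} (hf : Measurable f) (ε : ℝ) :
    Measurable (fun p : ℝ × ℝ => if ε < |p.1 - p.2| then f p.2 / (p.1 - p.2) else 0) := by
  refine Measurable.ite ?_ ?_ measurable_const
  · exact measurableSet_lt measurable_const ((measurable_fst.sub measurable_snd).abs)
  · exact (hf.comp measurable_snd).div (measurable_fst.sub measurable_snd)

lemma truncHilbert_meas {f : ℝ → ℝ} (hf : Measurable f) (ε : ℝ) :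
    Measurable (truncHilbert f ε) := by
  have : StronglyMeasurable
      (Function.uncurry fun x t => if ε < |x - t| then f t / (x - t) else 0) :=
    (Tk_meas hf ε).stronglyMeasurable
  exact this.integral_prod_right.measurable

lemma Tk_bound {f : ℝ → ℝ} {ε : ℝ} (hε : 0 < ε) (x t : ℝ) :
    |if ε < |x - t| then f t / (x - t) else 0| ≤ ε⁻¹ * |f t| := by
  split_ifs with h
  · rw [abs_div]
    calc |f t| / |x - t| ≤ |f t| / ε :=
        div_le_div_of_nonneg_left (abs_nonneg _) hε h.le
      _ = ε⁻¹ * |f t| := by rw [div_eq_inv_mul]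
  · simp [abs_nonneg, mul_nonneg (inv_nonneg.mpr hε.le) (abs_nonneg (f t))]

lemma truncHilbert_bound {f : ℝ → ℝ} {ε : ℝ} (hε : 0 < ε)
    (hf_int : IntegrableOn f (Set.Ioo 0 1) volume) (x : ℝ) :
    |truncHilbert f ε x| ≤ ε⁻¹ * ∫ t in Set.Ioo (0:ℝ) 1, |f t| := by
  have h := MeasureTheory.norm_integral_le_of_norm_le
    (f := fun t => if ε < |x - t| then f t / (x - t) else 0)
    (g := fun t => ε⁻¹ * |f t|) (μ := volume.restrict (Set.Ioo (0:ℝ) 1))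
    (hf_int.abs.const_mul ε⁻¹) (Eventually.of_forall fun t => by
      simpa using Tk_bound hε x t)
  simpa [truncHilbert, MeasureTheory.integral_const_mul] using h



noncomputable def Tk (f : ℝ → ℝ) (ε x t : ℝ) : ℝ :=
  if ε < |x - t| then f t / (x - t) else 0

noncomputable def PP (m : ℕ) (x : ℝ) : ℝ := x ^ m * (x * (1 - x))

noncomputable def AA (f : ℝ → ℝ) (ε : ℝ) (m : ℕ) (x y : ℝ) : ℝ :=
  (-(PP m x) * f x) * Tk f ε x y

lemma truncHilbert_eq_Tk (f : ℝ → ℝ) (ε x : ℝ) :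
    truncHilbert f ε x = ∫ t in Set.Ioo (0:ℝ) 1, Tk f ε x t := rfl

lemma PP_meas (m : ℕ) : Measurable (PP m) :=
  (measurable_id.pow_const m).mul
    (measurable_id.mul (measurable_const.sub measurable_id))

lemma PP_abs_le {m : ℕ} {x : ℝ} (hx : x ∈ Set.Ioo (0:ℝ) 1) : |PP m x| ≤ 1 := by
  obtain ⟨h0, h1⟩ := hx
  have hp : x ^ m ≤ 1 := pow_le_one₀ h0.le h1.le
  have hp0 : (0:ℝ) ≤ x ^ m := pow_nonneg h0.le m
  have hw0 : 0 ≤ x * (1 - x) := by nlinarith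
  have hw1 : x * (1 - x) ≤ 1 := by nlinarith
  rw [PP, abs_of_nonneg (mul_nonneg hp0 hw0)]
  calc x ^ m * (x * (1 - x)) ≤ 1 * 1 := mul_le_mul hp hw1 hw0 zero_le_one
    _ = 1 := one_mul 1

lemma Tk_meas_right {f : ℝ → ℝ} (hf : Measurable f) (ε x : ℝ) :
    Measurable (fun t => Tk f ε x t) :=
  (Tk_meas hf ε).comp (measurable_const.prodMk measurable_id)

lemma Tk_meas_left {f : ℝ → ℝ} (hf : Measurable f) (ε x : ℝ) :
    Measurable (fun t => Tk f ε t x) :=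
  (Tk_meas hf ε).comp (measurable_id.prodMk measurable_const)

lemma Tk_int_right {f : ℝ → ℝ} (hf_meas : Measurable f)
    (hf_int : IntegrableOn f (Set.Ioo 0 1) volume) {ε : ℝ} (hε : 0 < ε) (x : ℝ) :
    Integrable (fun t => Tk f ε x t) (volume.restrict (Set.Ioo (0:ℝ) 1)) := by
  refine Integrable.mono' (hf_int.abs.const_mul ε⁻¹)
    (Tk_meas_right hf_meas ε x).aestronglyMeasurable
    (Eventually.of_forall fun t => ?_)
  simpa [Tk] using Tk_bound hε x t

lemma AA_meas {f : ℝ → ℝ} (hf : Measurable f) (ε : ℝ) (m : ℕ) :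
    Measurable (Function.uncurry (AA f ε m)) :=
  (((PP_meas m).comp measurable_fst).neg.mul (hf.comp measurable_fst)).mul
    (Tk_meas hf ε)

lemma AA_swap_meas {f : ℝ → ℝ} (hf : Measurable f) (ε : ℝ) (m : ℕ) :
    Measurable (Function.uncurry (fun x y => AA f ε m y x)) :=
  (((PP_meas m).comp measurable_snd).neg.mul (hf.comp measurable_snd)).mul
    ((Tk_meas hf ε).comp (measurable_snd.prodMk measurable_fst))

lemma split_eq (f : ℝ → ℝ) (m : ℕ) {ε : ℝ} (hε : 0 < ε) (x y : ℝ) :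
    (if ε < |x - y| then
        ((x ^ (m + 2) - y ^ (m + 2)) / (x - y)
          - (x ^ (m + 1) - y ^ (m + 1)) / (x - y)) else 0) * f x * f y
      = AA f ε m x y + AA f ε m y x := by
  unfold AA Tk PP
  by_cases h : ε < |x - y|
  · have hne : x ≠ y := by
      intro h'; subst h'; simp only [sub_self, abs_zero] at h; linarith
    have hd : x - y ≠ 0 := sub_ne_zero.mpr hne
    have hd' : y - x ≠ 0 := sub_ne_zero.mpr hne.symm
    rw [if_pos h, if_pos h, if_pos (by rwa [abs_sub_comm])]
    field_simp
    ring
  · rw [if_neg h, if_neg h, if_neg (by rwa [abs_sub_comm])]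
    ring

lemma stepA (f : ℝ → ℝ) (hf_meas : Measurable f)
    (hf_int : IntegrableOn f (Set.Ioo 0 1) volume) (m : ℕ) {ε : ℝ} (hε : 0 < ε) :
    (∫ x₁ in Set.Ioo (0:ℝ) 1, ∫ x₂ in Set.Ioo (0:ℝ) 1,
        (if ε < |x₁ - x₂| then
          ((x₁ ^ (m + 2) - x₂ ^ (m + 2)) / (x₁ - x₂)
            - (x₁ ^ (m + 1) - x₂ ^ (m + 1)) / (x₁ - x₂)) else 0) * f x₁ * f x₂)
      = -2 * ∫ x in Set.Ioo (0:ℝ) 1,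
          x ^ m * truncHilbert f ε x * f x * (x * (1 - x)) := by
  set μ := volume.restrict (Set.Ioo (0:ℝ) 1) with hμdef
  have hfa : Integrable f μ := hf_int
  set Mf := ∫ t in Set.Ioo (0:ℝ) 1, |f t| with hMf
  have hae : ∀ᵐ x ∂μ, x ∈ Set.Ioo (0:ℝ) 1 := ae_restrict_mem measurableSet_Ioo
  have hprod_ae : ∀ᵐ p ∂(μ.prod μ), p.1 ∈ Set.Ioo (0:ℝ) 1 ∧ p.2 ∈ Set.Ioo (0:ℝ) 1 := by
    rw [hμdef, Measure.prod_restrict]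
    filter_upwards [ae_restrict_mem (measurableSet_Ioo.prod measurableSet_Ioo)] with p hp
    exact hp
  -- section integrability
  have hA_sec : ∀ x, Integrable (fun y => AA f ε m x y) μ := fun x =>
    (Tk_int_right hf_meas hf_int hε x).const_mul _
  have hB_sec : ∀ x, Integrable (fun y => AA f ε m y x) μ := by
    intro x
    refine Integrable.mono' (hfa.abs.mul_const (ε⁻¹ * |f x|))
      ((((PP_meas m).neg.mul hf_meas).mul (Tk_meas_left hf_meas ε x)).aestronglyMeasurable)
      ?_
    filter_upwards [hae] with y hy
    have h1 : |PP m y| ≤ 1 := PP_abs_le hy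
    have h2 : |Tk f ε y x| ≤ ε⁻¹ * |f x| := Tk_bound hε y x
    have := abs_nonneg (f y)
    have := abs_nonneg (Tk f ε y x)
    calc ‖(-(PP m y) * f y) * Tk f ε y x‖
        = |PP m y| * |f y| * |Tk f ε y x| := by
          rw [Real.norm_eq_abs, abs_mul, abs_mul, abs_neg]
      _ ≤ 1 * |f y| * (ε⁻¹ * |f x|) := by
          gcongr
      _ = |f y| * (ε⁻¹ * |f x|) := by ring
  have hInnerA : ∀ x, (∫ y, AA f ε m x y ∂μ)
      = (-(PP m x) * f x) * truncHilbert f ε x := by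
    intro x
    rw [truncHilbert_eq_Tk]
    exact integral_const_mul _ _
  -- outer integrability
  have houtA : Integrable (fun x => ∫ y, AA f ε m x y ∂μ) μ := by
    rw [show (fun x => ∫ y, AA f ε m x y ∂μ)
        = fun x => (-(PP m x) * f x) * truncHilbert f ε x from funext hInnerA]
    refine Integrable.mono' (hfa.abs.mul_const (ε⁻¹ * Mf))
      ((((PP_meas m).neg.mul hf_meas).mul (truncHilbert_meas hf_meas ε)).aestronglyMeasurable)
      ?_
    filter_upwards [hae] with x hx
    have h1 : |PP m x| ≤ 1 := PP_abs_le hx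
    have h2 : |truncHilbert f ε x| ≤ ε⁻¹ * Mf := truncHilbert_bound hε hf_int x
    calc ‖(-(PP m x) * f x) * truncHilbert f ε x‖
        = |PP m x| * |f x| * |truncHilbert f ε x| := by
          rw [Real.norm_eq_abs, abs_mul, abs_mul, abs_neg]
      _ ≤ 1 * |f x| * (ε⁻¹ * Mf) := by
          gcongr
      _ = |f x| * (ε⁻¹ * Mf) := by ring
  have houtB : Integrable (fun x => ∫ y, AA f ε m y x ∂μ) μ := by
    have hm : StronglyMeasurable (fun x => ∫ y, AA f ε m y x ∂μ) :=
      StronglyMeasurable.integral_prod_right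
        (f := fun x y => AA f ε m y x) (AA_swap_meas hf_meas ε m).stronglyMeasurable
    refine Integrable.mono' (hfa.abs.mul_const (ε⁻¹ * Mf))
      hm.aestronglyMeasurable ?_
    filter_upwards [hae] with x hx
    have hb : ∀ᵐ y ∂μ, ‖AA f ε m y x‖ ≤ |f y| * (ε⁻¹ * |f x|) := by
      filter_upwards [hae] with y hy
      have h1 : |PP m y| ≤ 1 := PP_abs_le hy
      have h2 : |Tk f ε y x| ≤ ε⁻¹ * |f x| := Tk_bound hε y x
      calc ‖(-(PP m y) * f y) * Tk f ε y x‖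
          = |PP m y| * |f y| * |Tk f ε y x| := by
            rw [Real.norm_eq_abs, abs_mul, abs_mul, abs_neg]
        _ ≤ 1 * |f y| * (ε⁻¹ * |f x|) := by
            gcongr
        _ = |f y| * (ε⁻¹ * |f x|) := by ring
    have := norm_integral_le_of_norm_le (hfa.abs.mul_const (ε⁻¹ * |f x|)) hb
    calc ‖∫ y, AA f ε m y x ∂μ‖ ≤ ∫ y, |f y| * (ε⁻¹ * |f x|) ∂μ := this
      _ = Mf * (ε⁻¹ * |f x|) := by rw [integral_mul_const]
      _ = |f x| * (ε⁻¹ * Mf) := by ring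
  -- product integrability of swapped AA
  have hsw : Integrable (Function.uncurry (fun x y => AA f ε m y x)) (μ.prod μ) := by
    refine Integrable.mono' (((hfa.abs.mul_prod hfa.abs)).const_mul ε⁻¹)
      (AA_swap_meas hf_meas ε m).aestronglyMeasurable ?_
    filter_upwards [hprod_ae] with p hp
    have h1 : |PP m p.2| ≤ 1 := PP_abs_le hp.2
    have h2 : |Tk f ε p.2 p.1| ≤ ε⁻¹ * |f p.1| := Tk_bound hε p.2 p.1
    calc ‖(-(PP m p.2) * f p.2) * Tk f ε p.2 p.1‖
        = |PP m p.2| * |f p.2| * |Tk f ε p.2 p.1| := by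
          rw [Real.norm_eq_abs, abs_mul, abs_mul, abs_neg]
      _ ≤ 1 * |f p.2| * (ε⁻¹ * |f p.1|) := by
          gcongr
      _ = ε⁻¹ * (|f p.1| * |f p.2|) := by ring
  -- main computation
  have hXneg : (∫ x, (-(PP m x) * f x) * truncHilbert f ε x ∂μ)
      = - ∫ x in Set.Ioo (0:ℝ) 1,
          x ^ m * truncHilbert f ε x * f x * (x * (1 - x)) := by
    rw [← integral_neg]
    refine integral_congr_ae (Eventually.of_forall fun x => ?_)
    unfold PP; ring
  calc (∫ x₁ in Set.Ioo (0:ℝ) 1, ∫ x₂ in Set.Ioo (0:ℝ) 1,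
        (if ε < |x₁ - x₂| then
          ((x₁ ^ (m + 2) - x₂ ^ (m + 2)) / (x₁ - x₂)
            - (x₁ ^ (m + 1) - x₂ ^ (m + 1)) / (x₁ - x₂)) else 0) * f x₁ * f x₂)
      = ∫ x, ((∫ y, AA f ε m x y ∂μ) + (∫ y, AA f ε m y x ∂μ)) ∂μ := by
        refine integral_congr_ae (Eventually.of_forall fun x => ?_)
        simp only [split_eq f m hε]
        exact integral_add (hA_sec x) (hB_sec x)
    _ = (∫ x, ∫ y, AA f ε m x y ∂μ ∂μ) + (∫ x, ∫ y, AA f ε m y x ∂μ ∂μ) :=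
        integral_add houtA houtB
    _ = (∫ x, ∫ y, AA f ε m x y ∂μ ∂μ) + (∫ x, ∫ y, AA f ε m x y ∂μ ∂μ) := by
        rw [integral_integral_swap hsw]
    _ = -2 * ∫ x in Set.Ioo (0:ℝ) 1,
          x ^ m * truncHilbert f ε x * f x * (x * (1 - x)) := by
        simp only [hInnerA]
        rw [hXneg]; ring



lemma offdiag_ae : ∀ᵐ p ∂((volume.restrict (Set.Ioo (0:ℝ) 1)).prod
    (volume.restrict (Set.Ioo (0:ℝ) 1))), p.1 ≠ p.2 := by
  set μ := volume.restrict (Set.Ioo (0:ℝ) 1)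
  have hs : MeasurableSet {p : ℝ × ℝ | p.1 ≠ p.2} :=
    (measurableSet_eq_fun measurable_fst measurable_snd).compl
  rw [show {p : ℝ × ℝ | p.1 ≠ p.2} = {p : ℝ × ℝ | p.1 = p.2}ᶜ from rfl] at hs
  rw [Measure.ae_prod_iff_ae_ae (by exact hs)]
  refine Eventually.of_forall fun x => ?_
  have h0 : μ {x} = 0 := by
    have : μ {x} ≤ volume {x} := Measure.restrict_apply_le _ _
    simpa [Real.volume_singleton] using le_antisymm (by simpa using this) (zero_le _)
  rw [ae_iff]
  convert h0 using 2
  ext y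
  simp [eq_comm]

lemma Kker_meas {f : ℝ → ℝ} (hf : Measurable f) (m : ℕ) (ε : ℝ) :
    Measurable (fun p : ℝ × ℝ =>
      (if ε < |p.1 - p.2| then
        ((p.1 ^ (m + 2) - p.2 ^ (m + 2)) / (p.1 - p.2)
          - (p.1 ^ (m + 1) - p.2 ^ (m + 1)) / (p.1 - p.2)) else 0) * f p.1 * f p.2) := by
  have hK : Measurable (fun p : ℝ × ℝ =>
      ((p.1 ^ (m + 2) - p.2 ^ (m + 2)) / (p.1 - p.2)
        - (p.1 ^ (m + 1) - p.2 ^ (m + 1)) / (p.1 - p.2))) :=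
    (((measurable_fst.pow_const _).sub (measurable_snd.pow_const _)).div
      (measurable_fst.sub measurable_snd)).sub
      (((measurable_fst.pow_const _).sub (measurable_snd.pow_const _)).div
      (measurable_fst.sub measurable_snd))
  exact ((Measurable.ite
    (measurableSet_lt measurable_const ((measurable_fst.sub measurable_snd).abs))
    hK measurable_const).mul (hf.comp measurable_fst)).mul (hf.comp measurable_snd)

lemma Kker_meas' {f : ℝ → ℝ} (hf : Measurable f) (m : ℕ) :
    Measurable (fun p : ℝ × ℝ =>
      ((p.1 ^ (m + 2) - p.2 ^ (m + 2)) / (p.1 - p.2)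
        - (p.1 ^ (m + 1) - p.2 ^ (m + 1)) / (p.1 - p.2)) * f p.1 * f p.2) := by
  exact (((((measurable_fst.pow_const _).sub (measurable_snd.pow_const _)).div
      (measurable_fst.sub measurable_snd)).sub
      (((measurable_fst.pow_const _).sub (measurable_snd.pow_const _)).div
      (measurable_fst.sub measurable_snd))).mul (hf.comp measurable_fst)).mul
      (hf.comp measurable_snd)

lemma Kbound {m : ℕ} {x y : ℝ} (hx : x ∈ Set.Ioo (0:ℝ) 1) (hy : y ∈ Set.Ioo (0:ℝ) 1) :
    |(x ^ (m + 2) - y ^ (m + 2)) / (x - y)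
      - (x ^ (m + 1) - y ^ (m + 1)) / (x - y)| ≤ 2 * m + 3 := by
  have h1 := div_pow_sub_bound (m + 2) hx hy
  have h2 := div_pow_sub_bound (m + 1) hx hy
  have := abs_sub ((x ^ (m + 2) - y ^ (m + 2)) / (x - y))
    ((x ^ (m + 1) - y ^ (m + 1)) / (x - y))
  push_cast at h1 h2
  calc |(x ^ (m+2) - y ^ (m+2)) / (x - y) - (x ^ (m+1) - y ^ (m+1)) / (x - y)|
      ≤ |(x ^ (m+2) - y ^ (m+2)) / (x - y)| + |(x ^ (m+1) - y ^ (m+1)) / (x - y)| :=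
        abs_sub _ _
    _ ≤ 2 * m + 3 := by push_cast; linarith

lemma stepB (f : ℝ → ℝ) (hf_meas : Measurable f)
    (hf_int : IntegrableOn f (Set.Ioo 0 1) volume) (m : ℕ) :
    Tendsto (fun ε => ∫ x₁ in Set.Ioo (0:ℝ) 1, ∫ x₂ in Set.Ioo (0:ℝ) 1,
        (if ε < |x₁ - x₂| then
          ((x₁ ^ (m + 2) - x₂ ^ (m + 2)) / (x₁ - x₂)
            - (x₁ ^ (m + 1) - x₂ ^ (m + 1)) / (x₁ - x₂)) else 0) * f x₁ * f x₂)
      (nhdsWithin 0 (Set.Ioi 0))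
      (nhds (∫ x₁ in Set.Ioo (0:ℝ) 1, ∫ x₂ in Set.Ioo (0:ℝ) 1,
        ((x₁ ^ (m + 2) - x₂ ^ (m + 2)) / (x₁ - x₂)
          - (x₁ ^ (m + 1) - x₂ ^ (m + 1)) / (x₁ - x₂)) * f x₁ * f x₂)) := by
  set μ := volume.restrict (Set.Ioo (0:ℝ) 1) with hμdef
  have hfa : Integrable f μ := hf_int
  have hprod_ae : ∀ᵐ p ∂(μ.prod μ), p.1 ∈ Set.Ioo (0:ℝ) 1 ∧ p.2 ∈ Set.Ioo (0:ℝ) 1 := by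
    rw [hμdef, Measure.prod_restrict]
    filter_upwards [ae_restrict_mem (measurableSet_Ioo.prod measurableSet_Ioo)] with p hp
    exact hp
  have hbd_int : Integrable (fun p : ℝ × ℝ => (2 * (m:ℝ) + 3) * (|f p.1| * |f p.2|))
      (μ.prod μ) := (hfa.abs.mul_prod hfa.abs).const_mul _
  -- the common pointwise bound
  have hbp : ∀ ε : ℝ, ∀ᵐ p ∂(μ.prod μ),
      ‖(if ε < |p.1 - p.2| then
        ((p.1 ^ (m + 2) - p.2 ^ (m + 2)) / (p.1 - p.2)
          - (p.1 ^ (m + 1) - p.2 ^ (m + 1)) / (p.1 - p.2)) else 0) * f p.1 * f p.2‖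
        ≤ (2 * (m:ℝ) + 3) * (|f p.1| * |f p.2|) := by
    intro ε
    filter_upwards [hprod_ae] with p hp
    rw [Real.norm_eq_abs, abs_mul, abs_mul]
    have hK : |(if ε < |p.1 - p.2| then
        ((p.1 ^ (m + 2) - p.2 ^ (m + 2)) / (p.1 - p.2)
          - (p.1 ^ (m + 1) - p.2 ^ (m + 1)) / (p.1 - p.2)) else 0)| ≤ 2 * (m:ℝ) + 3 := by
      split_ifs with h
      · exact Kbound hp.1 hp.2
      · simp; positivity
    calc |(if ε < |p.1 - p.2| then
        ((p.1 ^ (m + 2) - p.2 ^ (m + 2)) / (p.1 - p.2)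
          - (p.1 ^ (m + 1) - p.2 ^ (m + 1)) / (p.1 - p.2)) else 0)| * |f p.1| * |f p.2|
        ≤ (2 * (m:ℝ) + 3) * |f p.1| * |f p.2| := by gcongr
      _ = (2 * (m:ℝ) + 3) * (|f p.1| * |f p.2|) := by ring
  have hbpF : ∀ᵐ p ∂(μ.prod μ),
      ‖((p.1 ^ (m + 2) - p.2 ^ (m + 2)) / (p.1 - p.2)
          - (p.1 ^ (m + 1) - p.2 ^ (m + 1)) / (p.1 - p.2)) * f p.1 * f p.2‖
        ≤ (2 * (m:ℝ) + 3) * (|f p.1| * |f p.2|) := by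
    filter_upwards [hprod_ae] with p hp
    rw [Real.norm_eq_abs, abs_mul, abs_mul]
    have hK := Kbound (m := m) hp.1 hp.2
    calc |((p.1 ^ (m + 2) - p.2 ^ (m + 2)) / (p.1 - p.2)
          - (p.1 ^ (m + 1) - p.2 ^ (m + 1)) / (p.1 - p.2))| * |f p.1| * |f p.2|
        ≤ (2 * (m:ℝ) + 3) * |f p.1| * |f p.2| := by gcongr
      _ = (2 * (m:ℝ) + 3) * (|f p.1| * |f p.2|) := by ring
  have hGint : ∀ ε : ℝ, Integrable (Function.uncurry (fun x₁ x₂ =>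
      (if ε < |x₁ - x₂| then
        ((x₁ ^ (m + 2) - x₂ ^ (m + 2)) / (x₁ - x₂)
          - (x₁ ^ (m + 1) - x₂ ^ (m + 1)) / (x₁ - x₂)) else 0) * f x₁ * f x₂)) (μ.prod μ) :=
    fun ε => Integrable.mono' hbd_int (Kker_meas hf_meas m ε).aestronglyMeasurable (hbp ε)
  have hFint : Integrable (Function.uncurry (fun x₁ x₂ =>
      ((x₁ ^ (m + 2) - x₂ ^ (m + 2)) / (x₁ - x₂)
        - (x₁ ^ (m + 1) - x₂ ^ (m + 1)) / (x₁ - x₂)) * f x₁ * f x₂)) (μ.prod μ) :=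
    Integrable.mono' hbd_int (Kker_meas' hf_meas m).aestronglyMeasurable hbpF
  have hmain : Tendsto (fun ε => ∫ p, (if ε < |p.1 - p.2| then
        ((p.1 ^ (m + 2) - p.2 ^ (m + 2)) / (p.1 - p.2)
          - (p.1 ^ (m + 1) - p.2 ^ (m + 1)) / (p.1 - p.2)) else 0) * f p.1 * f p.2
        ∂(μ.prod μ))
      (nhdsWithin 0 (Set.Ioi 0))
      (nhds (∫ p, ((p.1 ^ (m + 2) - p.2 ^ (m + 2)) / (p.1 - p.2)
          - (p.1 ^ (m + 1) - p.2 ^ (m + 1)) / (p.1 - p.2)) * f p.1 * f p.2 ∂(μ.prod μ))) := by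
    refine tendsto_integral_filter_of_dominated_convergence
      (fun p => (2 * (m:ℝ) + 3) * (|f p.1| * |f p.2|))
      (Eventually.of_forall fun ε => (Kker_meas hf_meas m ε).aestronglyMeasurable)
      (Eventually.of_forall hbp) hbd_int ?_
    filter_upwards [offdiag_ae] with p hp
    have hpos : 0 < |p.1 - p.2| := abs_pos.mpr (sub_ne_zero.mpr hp)
    refine Tendsto.congr' ?_ tendsto_const_nhds
    filter_upwards [Ioo_mem_nhdsGT_of_mem (Set.mem_Ico.mpr ⟨le_refl 0, hpos⟩)] with ε hε
    rw [if_pos hε.2]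
  have h1 : ∀ ε : ℝ, (∫ x₁ in Set.Ioo (0:ℝ) 1, ∫ x₂ in Set.Ioo (0:ℝ) 1,
      (if ε < |x₁ - x₂| then
        ((x₁ ^ (m + 2) - x₂ ^ (m + 2)) / (x₁ - x₂)
          - (x₁ ^ (m + 1) - x₂ ^ (m + 1)) / (x₁ - x₂)) else 0) * f x₁ * f x₂)
      = ∫ p, (if ε < |p.1 - p.2| then
        ((p.1 ^ (m + 2) - p.2 ^ (m + 2)) / (p.1 - p.2)
          - (p.1 ^ (m + 1) - p.2 ^ (m + 1)) / (p.1 - p.2)) else 0) * f p.1 * f p.2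
        ∂(μ.prod μ) := fun ε => integral_integral (hGint ε)
  have h2 : (∫ x₁ in Set.Ioo (0:ℝ) 1, ∫ x₂ in Set.Ioo (0:ℝ) 1,
      ((x₁ ^ (m + 2) - x₂ ^ (m + 2)) / (x₁ - x₂)
        - (x₁ ^ (m + 1) - x₂ ^ (m + 1)) / (x₁ - x₂)) * f x₁ * f x₂)
      = ∫ p, ((p.1 ^ (m + 2) - p.2 ^ (m + 2)) / (p.1 - p.2)
          - (p.1 ^ (m + 1) - p.2 ^ (m + 1)) / (p.1 - p.2)) * f p.1 * f p.2 ∂(μ.prod μ) :=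
    integral_integral hFint
  rw [h2]
  exact hmain.congr fun ε => (h1 ε).symm



lemma cube_sub_le {a b : ℝ} : |a - b| ^ 3 ≤ 4 * (|a| ^ 3 + |b| ^ 3) := by
  have h1 : |a - b| ≤ |a| + |b| := abs_sub _ _
  have h2 : |a - b| ^ 3 ≤ (|a| + |b|) ^ 3 :=
    pow_le_pow_left₀ (abs_nonneg _) h1 3
  nlinarith [abs_nonneg a, abs_nonneg b, sq_nonneg (|a| - |b|),
    mul_nonneg (abs_nonneg a) (abs_nonneg b)]

lemma stepC (f Hf : ℝ → ℝ) (hf_meas : Measurable f)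
    (hf_int : IntegrableOn f (Set.Ioo 0 1) volume)
    (hf_L3 : IntegrableOn (fun x => |f x| ^ (3:ℕ) * (x * (1 - x))) (Set.Ioo 0 1) volume)
    (hHf_L3 : IntegrableOn (fun x => |Hf x| ^ (3:ℕ) * (x * (1 - x))) (Set.Ioo 0 1) volume)
    (h_ae : ∀ᵐ x ∂(volume.restrict (Set.Ioo (0:ℝ) 1)),
      Tendsto (fun ε => truncHilbert f ε x) (nhdsWithin 0 (Set.Ioi 0)) (nhds (Hf x)))
    (h_L3conv : Tendsto
      (fun ε => ∫ x in Set.Ioo (0:ℝ) 1, |truncHilbert f ε x - Hf x| ^ (3:ℕ) * (x * (1 - x)))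
      (nhdsWithin 0 (Set.Ioi 0)) (nhds 0))
    (m : ℕ) :
    Tendsto (fun ε => ∫ x in Set.Ioo (0:ℝ) 1,
        x ^ m * truncHilbert f ε x * f x * (x * (1 - x)))
      (nhdsWithin 0 (Set.Ioi 0))
      (nhds (∫ x in Set.Ioo (0:ℝ) 1, x ^ m * Hf x * f x * (x * (1 - x)))) := by
  set μ := volume.restrict (Set.Ioo (0:ℝ) 1) with hμdef
  have hfa : Integrable f μ := hf_int
  have hae : ∀ᵐ x ∂μ, x ∈ Set.Ioo (0:ℝ) 1 := ae_restrict_mem measurableSet_Ioo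
  set Mf := ∫ t in Set.Ioo (0:ℝ) 1, |f t| with hMfdef
  -- weight integrable
  have hw_int : Integrable (fun x : ℝ => x * (1 - x)) μ := by
    have hc : Continuous (fun x : ℝ => x * (1 - x)) :=
      continuous_id.mul (continuous_const.sub continuous_id)
    exact (hc.integrableOn_Icc (a := 0) (b := 1)).mono_set Set.Ioo_subset_Icc_self
  -- basic facts about the weight on Ioo
  have hwf : ∀ x ∈ Set.Ioo (0:ℝ) 1, 0 ≤ x * (1 - x) ∧ x * (1 - x) ≤ 1 ∧ |x ^ m| ≤ 1 := by
    intro x hx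
    obtain ⟨h0, h1⟩ := hx
    refine ⟨by nlinarith, by nlinarith, ?_⟩
    rw [abs_pow]
    exact pow_le_one₀ (abs_nonneg x) (abs_le.mpr ⟨by linarith, h1.le⟩)
  -- Hf is a.e. measurable
  have hHf_aem : AEMeasurable Hf μ := by
    obtain ⟨u, hu⟩ := (nhdsWithin (0:ℝ) (Set.Ioi 0)).exists_seq_tendsto
    refine aemeasurable_of_tendsto_metrizable_ae atTop
      (fun k => (truncHilbert_meas hf_meas (u k)).aemeasurable) ?_
    filter_upwards [h_ae] with x hx
    exact hx.comp hu
  -- |f|√|f| w integrable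
  have hfs_int : Integrable (fun x => (|f x| * Real.sqrt |f x|) * (x * (1 - x))) μ := by
    refine Integrable.mono' (g := fun x => (1 + |f x| ^ 3) * (x * (1 - x)))
      ?_ ?_ ?_
    · have : (fun x : ℝ => (1 + |f x| ^ 3) * (x * (1 - x)))
          = fun x => (x * (1 - x)) + |f x| ^ 3 * (x * (1 - x)) := by
        funext x; ring
      rw [this]
      exact hw_int.add hf_L3
    · exact ((hf_meas.abs.mul (hf_meas.abs.sqrt)).mul
        (measurable_id.mul (measurable_const.sub measurable_id))).aestronglyMeasurable
    · filter_upwards [hae] with x hx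
      obtain ⟨hw0, hw1, -⟩ := hwf x hx
      rw [Real.norm_eq_abs, abs_mul, abs_of_nonneg hw0,
        abs_of_nonneg (mul_nonneg (abs_nonneg _) (Real.sqrt_nonneg _))]
      exact mul_le_mul_of_nonneg_right (self_sqrt_le (abs_nonneg (f x))) hw0
  set M := ∫ x, (|f x| * Real.sqrt |f x|) * (x * (1 - x)) ∂μ with hMdef
  have hM0 : 0 ≤ M := by
    refine integral_nonneg_of_ae ?_
    filter_upwards [hae] with x hx
    exact mul_nonneg (mul_nonneg (abs_nonneg _) (Real.sqrt_nonneg _)) (hwf x hx).1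
  -- integrability of the limit integrand
  have hS_int : Integrable (fun x => x ^ m * Hf x * f x * (x * (1 - x))) μ := by
    have hgint : Integrable (fun x => |Hf x| ^ 3 * (x * (1 - x))
        + (|f x| * Real.sqrt |f x|) * (x * (1 - x))) μ := hHf_L3.add hfs_int
    have hm : AEStronglyMeasurable (fun x => x ^ m * Hf x * f x * (x * (1 - x))) μ :=
      ((((measurable_id.pow_const m).aemeasurable.mul hHf_aem).mul
        hf_meas.aemeasurable).mul
        (measurable_id.mul (measurable_const.sub measurable_id)).aemeasurable).aestronglyMeasurable
    refine Integrable.mono' hgint hm ?_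
    filter_upwards [hae] with x hx
    obtain ⟨hw0, hw1, hxm⟩ := hwf x hx
    have key : |Hf x| * |f x| ≤ |Hf x| ^ 3 + |f x| * Real.sqrt |f x| :=
      mul_le_cube_add (abs_nonneg _) (abs_nonneg _)
    calc ‖x ^ m * Hf x * f x * (x * (1 - x))‖
        = |x ^ m| * |Hf x| * |f x| * |x * (1 - x)| := by
          rw [Real.norm_eq_abs, abs_mul, abs_mul, abs_mul]
      _ ≤ 1 * (|Hf x| * |f x|) * (x * (1 - x)) := by
          rw [abs_of_nonneg hw0]
          have h9 : |x ^ m| * |Hf x| * |f x| ≤ 1 * (|Hf x| * |f x|) := by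
            nlinarith [mul_nonneg (abs_nonneg (Hf x)) (abs_nonneg (f x)),
              mul_nonneg (sub_nonneg.mpr hxm)
                (mul_nonneg (abs_nonneg (Hf x)) (abs_nonneg (f x)))]
          exact mul_le_mul_of_nonneg_right h9 hw0
      _ = (|Hf x| * |f x|) * (x * (1 - x)) := by ring
      _ ≤ (|Hf x| ^ 3 + |f x| * Real.sqrt |f x|) * (x * (1 - x)) :=
          mul_le_mul_of_nonneg_right key hw0
      _ = |Hf x| ^ 3 * (x * (1 - x)) + (|f x| * Real.sqrt |f x|) * (x * (1 - x)) := by ring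
  -- integrability of the truncated integrand for ε > 0
  have hSe_int : ∀ ε : ℝ, 0 < ε →
      Integrable (fun x => x ^ m * truncHilbert f ε x * f x * (x * (1 - x))) μ := by
    intro ε hε
    refine Integrable.mono' (g := fun x => (ε⁻¹ * Mf) * |f x|)
      ((hfa.abs.const_mul _))
      ((((measurable_id.pow_const m).mul (truncHilbert_meas hf_meas ε)).mul
        hf_meas).mul
        (measurable_id.mul (measurable_const.sub measurable_id))).aestronglyMeasurable ?_
    filter_upwards [hae] with x hx
    obtain ⟨hw0, hw1, hxm⟩ := hwf x hx
    have hTb := truncHilbert_bound hε hf_int x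
    calc ‖x ^ m * truncHilbert f ε x * f x * (x * (1 - x))‖
        = |x ^ m| * |truncHilbert f ε x| * |f x| * |x * (1 - x)| := by
          rw [Real.norm_eq_abs, abs_mul, abs_mul, abs_mul]
      _ ≤ 1 * (ε⁻¹ * Mf) * |f x| * 1 := by
          rw [abs_of_nonneg hw0]
          gcongr
      _ = (ε⁻¹ * Mf) * |f x| := by ring
  -- integrability of |Hε - Hf|³ w
  have hE_int : ∀ ε : ℝ, 0 < ε →
      Integrable (fun x => |truncHilbert f ε x - Hf x| ^ (3:ℕ) * (x * (1 - x))) μ := by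
    intro ε hε
    have hgint : Integrable (fun x : ℝ => (4 * ((ε⁻¹ * Mf) ^ 3)) * (x * (1 - x))
        + (4:ℝ) * (|Hf x| ^ 3 * (x * (1 - x)))) μ :=
      (hw_int.const_mul _).add (hHf_L3.const_mul 4)
    have h1 : AEMeasurable (fun x => |truncHilbert f ε x - Hf x|) μ :=
      measurable_abs.comp_aemeasurable
        ((truncHilbert_meas hf_meas ε).aemeasurable.sub hHf_aem)
    have hm : AEStronglyMeasurable
        (fun x => |truncHilbert f ε x - Hf x| ^ (3:ℕ) * (x * (1 - x))) μ :=
      ((h1.pow_const 3).mul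
        (measurable_id.mul (measurable_const.sub measurable_id)).aemeasurable).aestronglyMeasurable
    refine Integrable.mono' hgint hm ?_
    filter_upwards [hae] with x hx
    obtain ⟨hw0, hw1, -⟩ := hwf x hx
    have hTb := truncHilbert_bound hε hf_int x
    have hc : |truncHilbert f ε x - Hf x| ^ 3
        ≤ 4 * (|truncHilbert f ε x| ^ 3 + |Hf x| ^ 3) := cube_sub_le
    have hT3 : |truncHilbert f ε x| ^ 3 ≤ (ε⁻¹ * Mf) ^ 3 :=
      pow_le_pow_left₀ (abs_nonneg _) hTb 3
    rw [Real.norm_eq_abs, abs_mul, abs_of_nonneg hw0,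
      abs_of_nonneg (pow_nonneg (abs_nonneg _) _)]
    calc |truncHilbert f ε x - Hf x| ^ 3 * (x * (1 - x))
        ≤ (4 * ((ε⁻¹ * Mf) ^ 3 + |Hf x| ^ 3)) * (x * (1 - x)) := by
          refine mul_le_mul_of_nonneg_right (hc.trans ?_) hw0
          nlinarith
      _ = (4 * ((ε⁻¹ * Mf) ^ 3)) * (x * (1 - x)) + 4 * (|Hf x| ^ 3 * (x * (1 - x))) := by ring
  -- the main estimate
  have hmain : ∀ ε : ℝ, 0 < ε → ∀ lam : ℝ, 0 < lam →
      |(∫ x in Set.Ioo (0:ℝ) 1, x ^ m * truncHilbert f ε x * f x * (x * (1 - x)))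
        - ∫ x in Set.Ioo (0:ℝ) 1, x ^ m * Hf x * f x * (x * (1 - x))|
      ≤ lam⁻¹ ^ 3 * (∫ x in Set.Ioo (0:ℝ) 1,
          |truncHilbert f ε x - Hf x| ^ (3:ℕ) * (x * (1 - x)))
        + (lam * Real.sqrt lam) * M := by
    intro ε hε lam hlam
    have hdiff : (∫ x in Set.Ioo (0:ℝ) 1, x ^ m * truncHilbert f ε x * f x * (x * (1 - x)))
        - ∫ x in Set.Ioo (0:ℝ) 1, x ^ m * Hf x * f x * (x * (1 - x))
        = ∫ x, (x ^ m * truncHilbert f ε x * f x * (x * (1 - x))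
            - x ^ m * Hf x * f x * (x * (1 - x))) ∂μ :=
      (integral_sub (hSe_int ε hε) hS_int).symm
    rw [hdiff]
    have hgi : Integrable (fun x => lam⁻¹ ^ 3 *
        (|truncHilbert f ε x - Hf x| ^ (3:ℕ) * (x * (1 - x)))
        + (lam * Real.sqrt lam) * ((|f x| * Real.sqrt |f x|) * (x * (1 - x)))) μ :=
      ((hE_int ε hε).const_mul _).add (hfs_int.const_mul _)
    have hptw : ∀ᵐ x ∂μ, ‖x ^ m * truncHilbert f ε x * f x * (x * (1 - x))
        - x ^ m * Hf x * f x * (x * (1 - x))‖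
        ≤ lam⁻¹ ^ 3 * (|truncHilbert f ε x - Hf x| ^ (3:ℕ) * (x * (1 - x)))
          + (lam * Real.sqrt lam) * ((|f x| * Real.sqrt |f x|) * (x * (1 - x))) := by
      filter_upwards [hae] with x hx
      obtain ⟨hw0, hw1, hxm⟩ := hwf x hx
      set g := truncHilbert f ε x - Hf x with hgdef
      have hrw : x ^ m * truncHilbert f ε x * f x * (x * (1 - x))
          - x ^ m * Hf x * f x * (x * (1 - x)) = x ^ m * g * f x * (x * (1 - x)) := by
        rw [hgdef]; ring
      rw [hrw, Real.norm_eq_abs, abs_mul, abs_mul, abs_mul, abs_of_nonneg hw0]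
      have key : (lam⁻¹ * |g|) * (lam * |f x|)
          ≤ (lam⁻¹ * |g|) ^ 3 + (lam * |f x|) * Real.sqrt (lam * |f x|) :=
        mul_le_cube_add (mul_nonneg (by positivity) (abs_nonneg _))
          (mul_nonneg hlam.le (abs_nonneg _))
      have heq : |g| * |f x| = (lam⁻¹ * |g|) * (lam * |f x|) := by
        field_simp
      have hsq : Real.sqrt (lam * |f x|) = Real.sqrt lam * Real.sqrt |f x| :=
        Real.sqrt_mul hlam.le _
      calc |x ^ m| * |g| * |f x| * (x * (1 - x))
          ≤ 1 * (|g| * |f x|) * (x * (1 - x)) := by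
            have h9 : |x ^ m| * |g| * |f x| ≤ 1 * (|g| * |f x|) := by
              nlinarith [mul_nonneg (abs_nonneg g) (abs_nonneg (f x)),
                mul_nonneg (sub_nonneg.mpr hxm)
                  (mul_nonneg (abs_nonneg g) (abs_nonneg (f x)))]
            exact mul_le_mul_of_nonneg_right h9 hw0
        _ = (|g| * |f x|) * (x * (1 - x)) := by ring
        _ ≤ ((lam⁻¹ * |g|) ^ 3 + (lam * |f x|) * Real.sqrt (lam * |f x|)) * (x * (1 - x)) := by
            refine mul_le_mul_of_nonneg_right ?_ hw0
            rw [heq]; exact key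
        _ = lam⁻¹ ^ 3 * (|g| ^ 3 * (x * (1 - x)))
            + (lam * Real.sqrt lam) * ((|f x| * Real.sqrt |f x|) * (x * (1 - x))) := by
            rw [hsq]; ring
    have := norm_integral_le_of_norm_le hgi hptw
    rw [Real.norm_eq_abs] at this
    refine this.trans (le_of_eq ?_)
    rw [integral_add ((hE_int ε hε).const_mul _) (hfs_int.const_mul _),
      integral_const_mul, integral_const_mul, ← hMdef]
  -- conclude via ε-δ
  rw [Metric.tendsto_nhds]
  intro δ hδ
  set lam : ℝ := min 1 (δ / (2 * (M + 1))) with hlamdef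
  have hlam : 0 < lam := lt_min one_pos (by positivity)
  have hlam1 : lam ≤ 1 := min_le_left _ _
  have hsqlam : Real.sqrt lam ≤ 1 := Real.sqrt_le_one.mpr hlam1
  have hterm2 : (lam * Real.sqrt lam) * M < δ / 2 := by
    have h1 : lam * Real.sqrt lam ≤ lam := by
      nlinarith [Real.sqrt_nonneg lam]
    have h2 : lam ≤ δ / (2 * (M + 1)) := min_le_right _ _
    have h3 : (lam * Real.sqrt lam) * M ≤ lam * M :=
      mul_le_mul_of_nonneg_right h1 hM0
    have h4 : lam * M ≤ (δ / (2 * (M + 1))) * M :=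
      mul_le_mul_of_nonneg_right h2 hM0
    have h5 : (δ / (2 * (M + 1))) * M < δ / 2 := by
      rw [div_mul_eq_mul_div, div_lt_div_iff₀ (by positivity) (by norm_num)]
      nlinarith
    linarith
  have hEsmall : ∀ᶠ ε in nhdsWithin (0:ℝ) (Set.Ioi 0),
      |∫ x in Set.Ioo (0:ℝ) 1,
        |truncHilbert f ε x - Hf x| ^ (3:ℕ) * (x * (1 - x))| < (δ / 2) * lam ^ 3 := by
    have := Metric.tendsto_nhds.mp h_L3conv ((δ / 2) * lam ^ 3) (by positivity)
    filter_upwards [this] with ε hE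
    rwa [Real.dist_eq, sub_zero] at hE
  filter_upwards [hEsmall, self_mem_nhdsWithin] with ε hE hεpos
  rw [Real.dist_eq]
  have h := hmain ε hεpos lam hlam
  have hE' : lam⁻¹ ^ 3 * (∫ x in Set.Ioo (0:ℝ) 1,
      |truncHilbert f ε x - Hf x| ^ (3:ℕ) * (x * (1 - x))) < δ / 2 := by
    have hb : (∫ x in Set.Ioo (0:ℝ) 1,
        |truncHilbert f ε x - Hf x| ^ (3:ℕ) * (x * (1 - x))) < (δ / 2) * lam ^ 3 :=
      (le_abs_self _).trans_lt hE
    have hpos : (0:ℝ) < lam⁻¹ ^ 3 := by positivity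
    calc lam⁻¹ ^ 3 * (∫ x in Set.Ioo (0:ℝ) 1,
        |truncHilbert f ε x - Hf x| ^ (3:ℕ) * (x * (1 - x)))
        < lam⁻¹ ^ 3 * ((δ / 2) * lam ^ 3) := by
          exact mul_lt_mul_of_pos_left hb hpos
      _ = δ / 2 := by
          field_simp
    -- done
  linarith

end Stmt11Aux

/-- symmetrization identity for the logarithmic kernel. If `ν` is the
measure on `(0,1)` with density `f ∈ L³((0,1), x(1−x)dx)` and the truncated Hilbert
transforms `H_ε f` converge (a.e. and in the weighted `L³` norm) to `Hf`, then for
every `n ≥ 1`,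
`∬ ((x₁^{n+1}−x₂^{n+1})/(x₁−x₂) − (x₁^n−x₂^n)/(x₁−x₂)) dν(x₁)dν(x₂)
   = −2 ∫₀¹ x^{n−1} (Hf)(x) f(x) x(1−x) dx`. -/
theorem stmt_11 (f Hf : ℝ → ℝ) (n : ℕ) (hn : 1 ≤ n)
    (hf_meas : Measurable f) (hf_nonneg : ∀ x ∈ Set.Ioo (0:ℝ) 1, 0 ≤ f x)
    (hf_int : IntegrableOn f (Set.Ioo 0 1) volume)
    (hf_L3 : IntegrableOn (fun x => |f x| ^ (3:ℕ) * (x * (1 - x))) (Set.Ioo 0 1) volume)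
    (hHf_L3 : IntegrableOn (fun x => |Hf x| ^ (3:ℕ) * (x * (1 - x))) (Set.Ioo 0 1) volume)
    (h_ae : ∀ᵐ x ∂(volume.restrict (Set.Ioo (0:ℝ) 1)),
      Tendsto (fun ε => truncHilbert f ε x) (nhdsWithin 0 (Set.Ioi 0)) (nhds (Hf x)))
    (h_L3conv : Tendsto
      (fun ε => ∫ x in Set.Ioo (0:ℝ) 1, |truncHilbert f ε x - Hf x| ^ (3:ℕ) * (x * (1 - x)))
      (nhdsWithin 0 (Set.Ioi 0)) (nhds 0)) :
    (∫ x₁ in Set.Ioo (0:ℝ) 1, ∫ x₂ in Set.Ioo (0:ℝ) 1,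
        ((x₁ ^ (n + 1) - x₂ ^ (n + 1)) / (x₁ - x₂)
          - (x₁ ^ n - x₂ ^ n) / (x₁ - x₂)) * f x₁ * f x₂)
      = -2 * ∫ x in Set.Ioo (0:ℝ) 1, x ^ (n - 1) * Hf x * f x * (x * (1 - x)) := by
  obtain ⟨m, rfl⟩ : ∃ m, n = m + 1 := ⟨n - 1, (Nat.succ_pred_eq_of_pos hn).symm⟩
  simp only [Nat.add_sub_cancel]
  have hB := Stmt11Aux.stepB f hf_meas hf_int m
  have hC := (Stmt11Aux.stepC f Hf hf_meas hf_int hf_L3 hHf_L3 h_ae h_L3conv m).const_mul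
    (-2 : ℝ)
  have hR : Tendsto (fun ε => ∫ x₁ in Set.Ioo (0:ℝ) 1, ∫ x₂ in Set.Ioo (0:ℝ) 1,
      (if ε < |x₁ - x₂| then
        ((x₁ ^ (m + 2) - x₂ ^ (m + 2)) / (x₁ - x₂)
          - (x₁ ^ (m + 1) - x₂ ^ (m + 1)) / (x₁ - x₂)) else 0) * f x₁ * f x₂)
      (nhdsWithin 0 (Set.Ioi 0))
      (nhds (-2 * ∫ x in Set.Ioo (0:ℝ) 1, x ^ m * Hf x * f x * (x * (1 - x)))) := by
    refine hC.congr' ?_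
    filter_upwards [self_mem_nhdsWithin] with ε hε
    exact (Stmt11Aux.stepA f hf_meas hf_int m hε).symm
  exact tendsto_nhds_unique hB hR
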